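/- Let u : H → ℂ be a bounded continuous positive definite function. Then û : G → ℂ, defined by û(g) = ∫_X u(α(g, x))·√(χ(g, x)) dμ(x), is positive definite on G. -/

import Mathlib

open MeasureTheory Filter Set
open scoped ENNReal ComplexOrder

/-- A function `u : G → ℂ` on a group is positive definite. -/
def IsPosDefFn {G : Type*} [Group G] (u : G → ℂ) : Prop :=
  ∀ (n : ℕ) (g : Fin n → G) (c : Fin n → ℂ),
    0 ≤ ∑ i, ∑ j, c i * (starRingEnd ℂ) (c j) * u ((g j)⁻¹ * g i)

/-- Lemma 2.1(a), positive-definite case: if `u : H → ℂ` is a bounded continuous positive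
definite function, then `û(g) = ∫_X u(α(g, x))·√(χ(g, x)) dμ(x)` is positive definite
on `G`. -/
theorem posdef_transfer
    {G H X : Type*}
    [Group G] [TopologicalSpace G] [IsTopologicalGroup G] [LocallyCompactSpace G]
    [SecondCountableTopology G] [T2Space G] [MeasurableSpace G] [BorelSpace G]
    [Group H] [TopologicalSpace H] [IsTopologicalGroup H] [LocallyCompactSpace H]
    [SecondCountableTopology H] [T2Space H] [MeasurableSpace H] [BorelSpace H]
    [MeasurableSpace X] [StandardBorelSpace X]
    [MulAction G X] (hact : Measurable fun p : G × X => p.1 • p.2)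
    (μ : Measure X) [IsProbabilityMeasure μ]
    -- the Radon–Nikodym cocycle of the action
    (χ : G → X → ℝ)
    (hχmeas : Measurable fun p : G × X => χ p.1 p.2)
    (hχnonneg : ∀ g x, 0 ≤ χ g x)
    (hχRN : ∀ g : G, ∀ f : X → ℝ≥0∞, Measurable f →
      ∫⁻ x, f (g • x) * ENNReal.ofReal (χ g x) ∂μ = ∫⁻ x, f x ∂μ)
    (hχcoc : ∀ g h : G, ∀ᵐ x ∂μ, χ (g * h) x = χ g (h • x) * χ h x)
    -- the Borel cocycle
    (α : G → X → H)
    (hαmeas : Measurable fun p : G × X => α p.1 p.2)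
    (hαcoc : ∀ g h : G, ∀ᵐ x ∂μ, α (g * h) x = α g (h • x) * α h x)
    -- `u` is a bounded continuous positive definite function on `H`
    (u : H → ℂ) (hucont : Continuous u) (C : ℝ) (hubdd : ∀ h, ‖u h‖ ≤ C)
    (hupd : IsPosDefFn u) :
    IsPosDefFn (fun g : G => ∫ x, u (α g x) * (Real.sqrt (χ g x) : ℂ) ∂μ) := by
  -- basic measurability facts
  have hχm : ∀ h : G, Measurable fun x => χ h x := fun h =>
    hχmeas.comp (measurable_const.prodMk measurable_id)
  have hαm : ∀ h : G, Measurable fun x => α h x := fun h =>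
    hαmeas.comp (measurable_const.prodMk measurable_id)
  have hsmulm : ∀ h : G, Measurable fun x : X => h • x := fun h =>
    hact.comp (measurable_const.prodMk measurable_id)
  have hC : 0 ≤ C := le_trans (norm_nonneg (u 1)) (hubdd 1)
  -- the total mass of each density is 1
  have hone : ∀ h : G, ∫⁻ x, ENNReal.ofReal (χ h x) ∂μ = 1 := by
    intro h
    have := hχRN h (fun _ => 1) measurable_const
    simpa using this
  have hχint : ∀ h : G, Integrable (fun x => χ h x) μ := by
    intro h
    refine ⟨(hχm h).aestronglyMeasurable, ?_⟩
    rw [hasFiniteIntegral_iff_ofReal (Eventually.of_forall (hχnonneg h)), hone h]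
    exact ENNReal.one_lt_top
  -- the image of the weighted measure under the action is μ
  have hmap : ∀ h : G, Measure.map (fun x => h • x)
      (μ.withDensity fun x => ENNReal.ofReal (χ h x)) = μ := by
    intro h
    ext s hs
    rw [Measure.map_apply (hsmulm h) hs, withDensity_apply _ ((hsmulm h) hs)]
    have key := hχRN h (s.indicator 1) (measurable_one.indicator hs)
    calc ∫⁻ x in (fun x => h • x) ⁻¹' s, ENNReal.ofReal (χ h x) ∂μ
        = ∫⁻ x, ((fun x => h • x) ⁻¹' s).indicator (fun x => ENNReal.ofReal (χ h x)) x ∂μ := by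
          rw [lintegral_indicator ((hsmulm h) hs)]
      _ = ∫⁻ x, s.indicator 1 (h • x) * ENNReal.ofReal (χ h x) ∂μ := by
          congr 1; funext x
          by_cases hx : h • x ∈ s <;> simp [Set.indicator, hx]
      _ = ∫⁻ x, s.indicator 1 x ∂μ := key
      _ = μ s := by rw [lintegral_indicator hs]; simp
  -- complex change-of-variables formula
  have hcov : ∀ (h : G) (f : X → ℂ), AEStronglyMeasurable f μ →
      ∫ x, f x ∂μ = ∫ x, (χ h x : ℂ) * f (h • x) ∂μ := by
    intro h f hf
    have hd : (fun x => ENNReal.ofReal (χ h x)) = fun x => (((χ h x).toNNReal : NNReal) : ℝ≥0∞) :=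
      rfl
    calc ∫ x, f x ∂μ
        = ∫ x, f x ∂(Measure.map (fun x => h • x)
            (μ.withDensity fun x => ENNReal.ofReal (χ h x))) := by rw [hmap h]
      _ = ∫ x, f (h • x) ∂(μ.withDensity fun x => ENNReal.ofReal (χ h x)) :=
          integral_map (hsmulm h).aemeasurable (by rw [hmap h]; exact hf)
      _ = ∫ x, (χ h x).toNNReal • f (h • x) ∂μ := by
          rw [hd]
          exact integral_withDensity_eq_integral_smul
            (measurable_real_toNNReal.comp (hχm h)) _
      _ = ∫ x, (χ h x : ℂ) * f (h • x) ∂μ := by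
          congr 1; funext x
          rw [NNReal.smul_def, Real.coe_toNNReal _ (hχnonneg h x), Complex.real_smul]
  intro n g c
  simp only []
  -- the rewritten form of each term
  set T : Fin n → Fin n → X → ℂ := fun i j x =>
    c i * (starRingEnd ℂ) (c j) *
      (u (α (g j)⁻¹ x * (α (g i)⁻¹ x)⁻¹) *
        (Real.sqrt (χ (g i)⁻¹ x) : ℂ) * (Real.sqrt (χ (g j)⁻¹ x) : ℂ)) with hT
  have hTmeas : ∀ i j, AEStronglyMeasurable (T i j) μ := by
    intro i j
    apply Measurable.aestronglyMeasurable
    apply Measurable.mul measurable_const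
    exact ((hucont.measurable.comp ((hαm (g j)⁻¹).mul (hαm (g i)⁻¹).inv)).mul
      (Complex.measurable_ofReal.comp (hχm (g i)⁻¹).sqrt)).mul
      (Complex.measurable_ofReal.comp (hχm (g j)⁻¹).sqrt)
  -- integrability of each term
  have hTint : ∀ i j, Integrable (T i j) μ := by
    intro i j
    refine Integrable.mono' (((hχint (g i)⁻¹).add (hχint (g j)⁻¹)).const_mul
      (‖c i‖ * ‖c j‖ * C / 2)) (hTmeas i j)
      (Eventually.of_forall fun x => ?_)
    have hsi : 0 ≤ Real.sqrt (χ (g i)⁻¹ x) := Real.sqrt_nonneg _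
    have hsj : 0 ≤ Real.sqrt (χ (g j)⁻¹ x) := Real.sqrt_nonneg _
    have hsqi : Real.sqrt (χ (g i)⁻¹ x) ^ 2 = χ (g i)⁻¹ x := Real.sq_sqrt (hχnonneg _ _)
    have hsqj : Real.sqrt (χ (g j)⁻¹ x) ^ 2 = χ (g j)⁻¹ x := Real.sq_sqrt (hχnonneg _ _)
    have hu : ‖u (α (g j)⁻¹ x * (α (g i)⁻¹ x)⁻¹)‖ ≤ C := hubdd _
    have hu0 : 0 ≤ ‖u (α (g j)⁻¹ x * (α (g i)⁻¹ x)⁻¹)‖ := norm_nonneg _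
    have habs : ‖T i j x‖ = ‖c i‖ * ‖c j‖ *
        (‖u (α (g j)⁻¹ x * (α (g i)⁻¹ x)⁻¹)‖ *
          Real.sqrt (χ (g i)⁻¹ x) * Real.sqrt (χ (g j)⁻¹ x)) := by
      simp only [hT, norm_mul, Complex.norm_conj, Complex.norm_real, Real.norm_eq_abs,
        abs_of_nonneg hsi, abs_of_nonneg hsj]
    rw [habs]; simp only [Pi.add_apply]
    have hci : 0 ≤ ‖c i‖ := norm_nonneg _
    have hcj : 0 ≤ ‖c j‖ := norm_nonneg _
    have h2 : Real.sqrt (χ (g i)⁻¹ x) * Real.sqrt (χ (g j)⁻¹ x) * 2 ≤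
        χ (g i)⁻¹ x + χ (g j)⁻¹ x := by
      nlinarith [sq_nonneg (Real.sqrt (χ (g i)⁻¹ x) - Real.sqrt (χ (g j)⁻¹ x))]
    have step1 : ‖u (α (g j)⁻¹ x * (α (g i)⁻¹ x)⁻¹)‖ *
        (Real.sqrt (χ (g i)⁻¹ x) * Real.sqrt (χ (g j)⁻¹ x)) ≤
        C * ((χ (g i)⁻¹ x + χ (g j)⁻¹ x) / 2) :=
      mul_le_mul hu (by linarith) (mul_nonneg hsi hsj) hC
    nlinarith [mul_le_mul_of_nonneg_left step1 (mul_nonneg hci hcj)]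
  -- the key identity for each term of the sum
  have key : ∀ i j : Fin n,
      c i * (starRingEnd ℂ) (c j) *
        ∫ x, u (α ((g j)⁻¹ * g i) x) * (Real.sqrt (χ ((g j)⁻¹ * g i) x) : ℂ) ∂μ =
      ∫ x, T i j x ∂μ := by
    intro i j
    set γ := (g j)⁻¹ * g i with hγdef
    have hγ : γ * (g i)⁻¹ = (g j)⁻¹ := by rw [hγdef]; exact mul_inv_cancel_right _ _
    have hfmeas : AEStronglyMeasurable
        (fun x => u (α γ x) * (Real.sqrt (χ γ x) : ℂ)) μ :=
      ((hucont.measurable.comp (hαm γ)).mul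
        (Complex.measurable_ofReal.comp (hχm γ).sqrt)).aestronglyMeasurable
    rw [hcov (g i)⁻¹ _ hfmeas, ← integral_const_mul]
    apply integral_congr_ae
    have h1 := hαcoc γ (g i)⁻¹
    have h2 := hχcoc γ (g i)⁻¹
    filter_upwards [h1, h2] with x hx1 hx2
    rw [hγ] at hx1 hx2
    have ha : α γ ((g i)⁻¹ • x) = α (g j)⁻¹ x * (α (g i)⁻¹ x)⁻¹ := by
      rw [hx1]; group
    have hreal : χ (g i)⁻¹ x * Real.sqrt (χ γ ((g i)⁻¹ • x)) =
        Real.sqrt (χ (g i)⁻¹ x) * Real.sqrt (χ (g j)⁻¹ x) := by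
      have hs : Real.sqrt (χ (g i)⁻¹ x) * Real.sqrt (χ (g i)⁻¹ x) = χ (g i)⁻¹ x :=
        Real.mul_self_sqrt (hχnonneg _ _)
      have hsj : Real.sqrt (χ (g j)⁻¹ x) =
          Real.sqrt (χ γ ((g i)⁻¹ • x)) * Real.sqrt (χ (g i)⁻¹ x) := by
        rw [hx2, Real.sqrt_mul (hχnonneg _ _)]
      rw [hsj]
      linear_combination (-Real.sqrt (χ γ ((g i)⁻¹ • x))) * hs
    simp only [hT]
    rw [ha]
    calc c i * (starRingEnd ℂ) (c j) *
          ((χ (g i)⁻¹ x : ℂ) *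
            (u (α (g j)⁻¹ x * (α (g i)⁻¹ x)⁻¹) * (Real.sqrt (χ γ ((g i)⁻¹ • x)) : ℂ)))
        = c i * (starRingEnd ℂ) (c j) *
          (u (α (g j)⁻¹ x * (α (g i)⁻¹ x)⁻¹) *
            (((χ (g i)⁻¹ x * Real.sqrt (χ γ ((g i)⁻¹ • x)) : ℝ) : ℂ))) := by
          push_cast; ring
      _ = _ := by rw [hreal]; push_cast; ring
  -- rewrite the double sum as a single integral
  have hsum : ∑ i, ∑ j, c i * (starRingEnd ℂ) (c j) *
      ∫ x, u (α ((g j)⁻¹ * g i) x) * (Real.sqrt (χ ((g j)⁻¹ * g i) x) : ℂ) ∂μ =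
      ∫ x, ∑ i, ∑ j, T i j x ∂μ := by
    rw [integral_finset_sum _ fun i _ => integrable_finset_sum _ fun j _ => hTint i j]
    refine Finset.sum_congr rfl fun i _ => ?_
    rw [integral_finset_sum _ fun j _ => hTint i j]
    exact Finset.sum_congr rfl fun j _ => key i j
  rw [hsum]
  -- pointwise nonnegativity of the integrand
  set S : X → ℂ := fun x => ∑ i, ∑ j, T i j x with hS
  have hSnonneg : ∀ x, 0 ≤ S x := by
    intro x
    have := hupd n (fun i => (α (g i)⁻¹ x)⁻¹)
      (fun i => c i * (Real.sqrt (χ (g i)⁻¹ x) : ℂ))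
    refine le_of_le_of_eq this ?_
    refine Finset.sum_congr rfl fun i _ => Finset.sum_congr rfl fun j _ => ?_
    simp only [T, inv_inv, map_mul, Complex.conj_ofReal]
    ring
  have hSre : ∀ x, S x = ((S x).re : ℂ) := by
    intro x
    have h := (Complex.le_def.mp (hSnonneg x)).2
    exact Complex.ext rfl (by simpa using h.symm)
  calc (0 : ℂ) ≤ ((∫ x, (S x).re ∂μ : ℝ) : ℂ) := by
        rw [Complex.le_def]
        constructor
        · simpa using integral_nonneg fun x => by
            simpa using (Complex.le_def.mp (hSnonneg x)).1
        · simp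
    _ = ∫ x, ((S x).re : ℂ) ∂μ := integral_ofReal.symm
    _ = ∫ x, S x ∂μ := integral_congr_ae (Eventually.of_forall fun x => (hSre x).symm)
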